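/- Co-intersectability is strictly stronger than the conjunction of intersectability and the RVE existence condition: there exists a relational schema S and valid relational paths Q, R, P, P′ of a common perspective B such that (1) P ∈ extend(Q,R), i.e., ∃σ ∃b ∃i_j ∈ Q|_b with R|_{i_j} ∩ P|_b ≠ ∅; (2) P and P′ are intersectable, i.e., ∃σ ∃b with P|_b ∩ P′|_b ≠ ∅; but (3) ⟨Q,R,P,P′⟩ is not co-intersectable, i.e., for all σ ∈ Σ_S, all b ∈ σ(B), and all i_j ∈ Q|_b, R|_{i_j} ∩ P|_b ∩ P′|_b = ∅. -/

import Mathlib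

/-- Kinds of item classes in a relational schema. -/
inductive ItemKind | entity | relationship
deriving DecidableEq

/-- Cardinalities. -/
inductive Card | one | many
deriving DecidableEq

/-- A relational schema: item classes with kinds, participation of entity
classes in relationship classes, and a cardinality function `card R E`. -/
structure Schema where
  Class : Type
  kind : Class → ItemKind
  participates : Class → Class → Prop   -- `participates E R`
  card : Class → Class → Card           -- `card R E`

namespace Schema

/-- Condition (1) of relational paths: alternation between entity and
relationship classes, with participation at each consecutive pair. -/
def Alternates (S : Schema) (P : List S.Class) : Prop :=
  ∀ i a b, P[i]? = some a → P[i+1]? = some b →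
    ((S.kind a = .entity ∧ S.kind b = .relationship ∧ S.participates a b) ∨
     (S.kind a = .relationship ∧ S.kind b = .entity ∧ S.participates b a))

/-- Condition (2): in every subsequence `[E, R, E']`, `E ≠ E'`. -/
def NoERE (S : Schema) (P : List S.Class) : Prop :=
  ∀ i a b c, P[i]? = some a → P[i+1]? = some b → P[i+2]? = some c →
    S.kind a = .entity → a ≠ c

/-- Condition (3): in every subsequence `[R, E, R']` with `R = R'`,
`card (R, E) = many`. -/
def CardMany (S : Schema) (P : List S.Class) : Prop :=
  ∀ i a b c, P[i]? = some a → P[i+1]? = some b → P[i+2]? = some c →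
    S.kind a = .relationship → a = c → S.card a b = .many

/-- A valid relational path. -/
def ValidPath (S : Schema) (P : List S.Class) : Prop :=
  P ≠ [] ∧ S.Alternates P ∧ S.NoERE P ∧ S.CardMany P

end Schema

/-- A relational skeleton instantiating a schema: items with classes and a
symmetric adjacency relation, respecting participation and cardinality
constraints (`card = one` forces at most one adjacent relationship instance;
relationship instances have exactly one adjacent entity instance per
participating entity class). -/
structure Skeleton (S : Schema) where
  Item : Type
  classOf : Item → S.Class
  adj : Item → Item → Prop
  adj_symm : ∀ {i j}, adj i j → adj j i
  adj_alt : ∀ {i j}, adj i j →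
    (S.kind (classOf i) = .entity ∧ S.kind (classOf j) = .relationship ∧
      S.participates (classOf i) (classOf j)) ∨
    (S.kind (classOf i) = .relationship ∧ S.kind (classOf j) = .entity ∧
      S.participates (classOf j) (classOf i))
  card_one : ∀ {e r r'}, S.kind (classOf e) = .entity →
    S.card (classOf r) (classOf e) = .one → classOf r = classOf r' →
    adj e r → adj e r' → r = r'
  rel_unique : ∀ {r i j}, S.kind (classOf r) = .relationship →
    adj r i → adj r j → classOf i = classOf j → i = j
  rel_total : ∀ {r E}, S.kind (classOf r) = .relationship →
    S.participates E (classOf r) → ∃ e, classOf e = E ∧ adj r e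

namespace Skeleton

variable {S : Schema} (σ : Skeleton S)

/-- Auxiliary recursion for terminal sets under bridge burning semantics:
`(tsetAux P b ℓ).1` is the terminal set `P^{1:ℓ+1}|_b` (0-indexed `ℓ`) and
`(tsetAux P b ℓ).2` is the set of all items visited up to step `ℓ`. -/
def tsetAux (P : List S.Class) (b : σ.Item) : ℕ → Set σ.Item × Set σ.Item
  | 0 => ({b}, {b})
  | ℓ+1 =>
      let prev := tsetAux P b ℓ
      let cur : Set σ.Item :=
        {i | P[ℓ+1]? = some (σ.classOf i) ∧ (∃ j ∈ prev.1, σ.adj i j) ∧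
             i ∉ prev.2}
      (cur, prev.2 ∪ cur)

/-- The terminal set `P^{1:ℓ+1}|_b` (so `ℓ` is 0-indexed: `tset P b 0 = {b}`). -/
def tset (P : List S.Class) (b : σ.Item) (ℓ : ℕ) : Set σ.Item :=
  (σ.tsetAux P b ℓ).1

/-- The (full) terminal set `P|_b`. -/
def tfull (P : List S.Class) (b : σ.Item) : Set σ.Item :=
  σ.tset P b (P.length - 1)

end Skeleton

/-- Item classes of the co-intersectability counterexample schema. -/
inductive C10 | Ij | Ik | B | E1 | E2 | E3 | R1 | R2 | R3 | R4 | R5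
deriving DecidableEq

open C10 in
/-- The counterexample schema: `R1=⟨B,E1⟩`, `R2=⟨E1,E3⟩`, `R3=⟨E1,E2⟩`,
`R4=⟨E2,E3,Ik⟩`, `R5=⟨Ik,Ij⟩`, with all cardinalities `one`. -/
def S10 : Schema where
  Class := C10
  kind := fun c => match c with
    | R1 | R2 | R3 | R4 | R5 => .relationship
    | _ => .entity
  participates := fun e r =>
    (e, r) ∈ ([(B,R1),(E1,R1),(E1,R2),(E3,R2),(E1,R3),(E2,R3),
               (E2,R4),(E3,R4),(Ik,R4),(Ik,R5),(Ij,R5)] : List (C10 × C10))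
  card := fun _ _ => .one

open C10 in
def Q10 : List C10 := [B,R1,E1,R2,E3,R4,Ik,R5,Ij]
open C10 in
def R10 : List C10 := [Ij,R5,Ik,R4,E3,R2,E1,R3,E2,R4,Ik]
open C10 in
def P10 : List C10 := [B,R1,E1,R3,E2,R4,Ik]
open C10 in
def P10' : List C10 := [B,R1,E1,R2,E3,R4,Ik]

namespace CoInt

open Skeleton

variable {S : Schema} (σ : Skeleton S)

theorem mem_tset_succ {P : List S.Class} {b i : σ.Item} {k : ℕ} :
    i ∈ σ.tset P b (k+1) ↔ P[k+1]? = some (σ.classOf i) ∧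
      (∃ j ∈ σ.tset P b k, σ.adj i j) ∧ i ∉ (σ.tsetAux P b k).2 := Iff.rfl

theorem tset_zero {P : List S.Class} {b : σ.Item} : σ.tset P b 0 = {b} := rfl

theorem visited_zero {P : List S.Class} {b : σ.Item} : (σ.tsetAux P b 0).2 = {b} := rfl

theorem visited_succ {P : List S.Class} {b : σ.Item} {k : ℕ} :
    (σ.tsetAux P b (k+1)).2 = (σ.tsetAux P b k).2 ∪ σ.tset P b (k+1) := rfl

theorem mem_visited_iff {P : List S.Class} {b i : σ.Item} :
    ∀ {k : ℕ}, i ∈ (σ.tsetAux P b k).2 ↔ ∃ m ≤ k, i ∈ σ.tset P b m := by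
  intro k
  induction k with
  | zero => exact ⟨fun h => ⟨0, le_refl 0, h⟩, fun ⟨m, hm, h⟩ => by
      rw [Nat.le_zero] at hm; subst hm; exact h⟩
  | succ k ih =>
    rw [visited_succ, Set.mem_union, ih]
    constructor
    · rintro (⟨m, hm, h⟩ | h)
      · exact ⟨m, Nat.le_succ_of_le hm, h⟩
      · exact ⟨k+1, le_refl _, h⟩
    · rintro ⟨m, hm, h⟩
      rcases Nat.lt_or_ge m (k+1) with hlt | hge
      · exact Or.inl ⟨m, Nat.lt_succ_iff.mp hlt, h⟩
      · have : m = k+1 := le_antisymm hm hge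
        subst this; exact Or.inr h

theorem tset_subset_visited {P : List S.Class} {b : σ.Item} {k : ℕ} :
    σ.tset P b k ⊆ (σ.tsetAux P b k).2 := fun i h =>
  (mem_visited_iff σ).2 ⟨k, le_refl _, h⟩

theorem tsetAux_congr {P P' : List S.Class} {b : σ.Item} :
    ∀ {k : ℕ}, (∀ m ≤ k, P[m]? = P'[m]?) → σ.tsetAux P b k = σ.tsetAux P' b k := by
  intro k
  induction k with
  | zero => intro _; rfl
  | succ k ih =>
    intro h
    have hk := ih (fun m hm => h m (Nat.le_succ_of_le hm))
    show ({i | P[k+1]? = some (σ.classOf i) ∧ (∃ j ∈ (σ.tsetAux P b k).1, σ.adj i j) ∧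
             i ∉ (σ.tsetAux P b k).2}, (σ.tsetAux P b k).2 ∪ _) = _
    rw [hk, h (k+1) (le_refl _)]
    rfl

/-- In the all-cardinality-one schema `S10`, terminal sets are subsingletons. -/
theorem tset_subsingleton (σ : Skeleton S10) (P : List C10) (b : σ.Item) :
    ∀ k, (σ.tset P b k).Subsingleton
  | 0 => by exact Set.subsingleton_singleton
  | (k+1) => by
    intro c hc c' hc'
    obtain ⟨h1, ⟨j, hj, ha⟩, -⟩ := (mem_tset_succ σ).1 hc
    obtain ⟨h1', ⟨j', hj', ha'⟩, -⟩ := (mem_tset_succ σ).1 hc'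
    have hjj : j = j' := tset_subsingleton σ P b k hj hj'
    subst hjj
    have hcc : σ.classOf c = σ.classOf c' := Option.some.inj (h1.symm.trans h1')
    rcases σ.adj_alt ha with ⟨_, hjr, _⟩ | ⟨_, hje, _⟩
    · exact σ.rel_unique hjr (σ.adj_symm ha) (σ.adj_symm ha') hcc
    · exact σ.card_one hje rfl hcc (σ.adj_symm ha) (σ.adj_symm ha')

theorem tset_eq_singleton {σ : Skeleton S10} {P : List C10} {b x : σ.Item} {k : ℕ}
    (hx : x ∈ σ.tset P b k) : σ.tset P b k = {x} :=
  (tset_subsingleton σ P b k).eq_singleton_of_mem hx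

/-- Step lemma for computing singleton terminal sets. -/
theorem tset_step {σ : Skeleton S10} {P : List C10} {b x i : σ.Item} {k : ℕ}
    (hk : σ.tset P b k = {x}) (hc : P[k+1]? = some (σ.classOf i))
    (ha : σ.adj i x) (hv : ∀ m ≤ k, i ∉ σ.tset P b m) :
    σ.tset P b (k+1) = {i} := by
  apply tset_eq_singleton
  refine (mem_tset_succ σ).2 ⟨hc, ⟨x, ?_, ha⟩, ?_⟩
  · rw [hk]; rfl
  · refine mt (mem_visited_iff σ).1 ?_
    rintro ⟨m, hm, h⟩
    exact hv m hm h

end CoInt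
instance : Fintype C10 := Fintype.ofList
  [.Ij, .Ik, .B, .E1, .E2, .E3, .R1, .R2, .R3, .R4, .R5] (by intro x; cases x <;> decide)

namespace CoInt

instance : DecidableEq S10.Class := inferInstanceAs (DecidableEq C10)
instance : Fintype S10.Class := inferInstanceAs (Fintype C10)
instance (a b : C10) : Decidable (S10.participates a b) := by
  unfold S10; infer_instance

/-- Items for the intersectability witness skeleton. -/
inductive V2 | b | r1 | e1 | r2 | e3 | r3 | e2 | r4 | ik
deriving DecidableEq

instance : Fintype V2 := Fintype.ofList
  [.b, .r1, .e1, .r2, .e3, .r3, .e2, .r4, .ik] (by intro x; cases x <;> decide)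

open C10 in
def classOf2 : V2 → C10
  | .b => B | .r1 => R1 | .e1 => E1 | .r2 => R2 | .e3 => E3
  | .r3 => R3 | .e2 => E2 | .r4 => R4 | .ik => Ik

def edges2 : List (V2 × V2) :=
  [(.r1,.b),(.r1,.e1),(.r2,.e1),(.r2,.e3),(.r3,.e1),(.r3,.e2),
   (.r4,.e2),(.r4,.e3),(.r4,.ik)]

def adj2 (i j : V2) : Prop := (i,j) ∈ edges2 ∨ (j,i) ∈ edges2

instance : DecidableRel adj2 := fun i j => by unfold adj2; infer_instance

@[reducible]
def σ2 : Skeleton S10 where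
  Item := V2
  classOf := classOf2
  adj := adj2
  adj_symm := by decide
  adj_alt := by decide
  card_one := by unfold S10; decide
  rel_unique := by unfold S10; decide
  rel_total := by unfold S10; decide

instance : DecidableEq σ2.Item := inferInstanceAs (DecidableEq V2)
instance : DecidableRel σ2.adj := inferInstanceAs (DecidableRel adj2)

end CoInt
namespace CoInt

/-- Items for the RVE-existence witness skeleton. -/
inductive V1
  | b | r1 | e1 | r2 | e3 | r3 | e2 | r4a | e2a | ika | r5 | ija
  | r4b | e3b | ikb
deriving DecidableEq

instance : Fintype V1 := Fintype.ofList
  [.b, .r1, .e1, .r2, .e3, .r3, .e2, .r4a, .e2a, .ika, .r5, .ija, .r4b, .e3b, .ikb]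
  (by intro x; cases x <;> decide)

open C10 in
def classOf1 : V1 → C10
  | .b => B | .r1 => R1 | .e1 => E1 | .r2 => R2 | .e3 => E3
  | .r3 => R3 | .e2 => E2 | .r4a => R4 | .e2a => E2 | .ika => Ik
  | .r5 => R5 | .ija => Ij | .r4b => R4 | .e3b => E3 | .ikb => Ik

def edges1 : List (V1 × V1) :=
  [(.r1,.b),(.r1,.e1),(.r2,.e1),(.r2,.e3),(.r3,.e1),(.r3,.e2),
   (.r4a,.e2a),(.r4a,.e3),(.r4a,.ika),(.r4b,.e2),(.r4b,.e3b),(.r4b,.ikb),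
   (.r5,.ika),(.r5,.ija)]

def adj1 (i j : V1) : Prop := (i,j) ∈ edges1 ∨ (j,i) ∈ edges1

instance : DecidableRel adj1 := fun i j => by unfold adj1; infer_instance

@[reducible]
def σ1 : Skeleton S10 where
  Item := V1
  classOf := classOf1
  adj := adj1
  adj_symm := by decide
  adj_alt := by decide
  card_one := by unfold S10; decide
  rel_unique := by unfold S10; decide
  rel_total := by unfold S10; decide

instance : DecidableEq σ1.Item := inferInstanceAs (DecidableEq V1)
instance : DecidableRel σ1.adj := inferInstanceAs (DecidableRel adj1)

end CoInt
namespace CoInt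

theorem part1 : ∃ (σ : Skeleton S10) (b : σ.Item), σ.classOf b = C10.B ∧
    ∃ ij ∈ σ.tfull Q10 b, (σ.tfull R10 ij ∩ σ.tfull P10 b).Nonempty := by
  have hq0 : σ1.tset Q10 V1.b 0 = {V1.b} := tset_zero _
  have hq1 : σ1.tset Q10 V1.b 1 = {V1.r1} :=
    tset_step hq0 rfl (by decide)
      (by intro m hm; interval_cases m <;>
            simp only [hq0, Set.mem_singleton_iff] <;> decide)
  have hq2 : σ1.tset Q10 V1.b 2 = {V1.e1} :=
    tset_step hq1 rfl (by decide)
      (by intro m hm; interval_cases m <;>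
            simp only [hq0, hq1, Set.mem_singleton_iff] <;> decide)
  have hq3 : σ1.tset Q10 V1.b 3 = {V1.r2} :=
    tset_step hq2 rfl (by decide)
      (by intro m hm; interval_cases m <;>
            simp only [hq0, hq1, hq2, Set.mem_singleton_iff] <;> decide)
  have hq4 : σ1.tset Q10 V1.b 4 = {V1.e3} :=
    tset_step hq3 rfl (by decide)
      (by intro m hm; interval_cases m <;>
            simp only [hq0, hq1, hq2, hq3, Set.mem_singleton_iff] <;> decide)
  have hq5 : σ1.tset Q10 V1.b 5 = {V1.r4a} :=
    tset_step hq4 rfl (by decide)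
      (by intro m hm; interval_cases m <;>
            simp only [hq0, hq1, hq2, hq3, hq4, Set.mem_singleton_iff] <;> decide)
  have hq6 : σ1.tset Q10 V1.b 6 = {V1.ika} :=
    tset_step hq5 rfl (by decide)
      (by intro m hm; interval_cases m <;>
            simp only [hq0, hq1, hq2, hq3, hq4, hq5, Set.mem_singleton_iff] <;> decide)
  have hq7 : σ1.tset Q10 V1.b 7 = {V1.r5} :=
    tset_step hq6 rfl (by decide)
      (by intro m hm; interval_cases m <;>
            simp only [hq0, hq1, hq2, hq3, hq4, hq5, hq6, Set.mem_singleton_iff] <;> decide)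
  have hq8 : σ1.tset Q10 V1.b 8 = {V1.ija} :=
    tset_step hq7 rfl (by decide)
      (by intro m hm; interval_cases m <;>
            simp only [hq0, hq1, hq2, hq3, hq4, hq5, hq6, hq7, Set.mem_singleton_iff] <;> decide)
  have hr0 : σ1.tset R10 V1.ija 0 = {V1.ija} := tset_zero _
  have hr1 : σ1.tset R10 V1.ija 1 = {V1.r5} :=
    tset_step hr0 rfl (by decide)
      (by intro m hm; interval_cases m <;>
            simp only [hr0, Set.mem_singleton_iff] <;> decide)
  have hr2 : σ1.tset R10 V1.ija 2 = {V1.ika} :=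
    tset_step hr1 rfl (by decide)
      (by intro m hm; interval_cases m <;>
            simp only [hr0, hr1, Set.mem_singleton_iff] <;> decide)
  have hr3 : σ1.tset R10 V1.ija 3 = {V1.r4a} :=
    tset_step hr2 rfl (by decide)
      (by intro m hm; interval_cases m <;>
            simp only [hr0, hr1, hr2, Set.mem_singleton_iff] <;> decide)
  have hr4 : σ1.tset R10 V1.ija 4 = {V1.e3} :=
    tset_step hr3 rfl (by decide)
      (by intro m hm; interval_cases m <;>
            simp only [hr0, hr1, hr2, hr3, Set.mem_singleton_iff] <;> decide)
  have hr5 : σ1.tset R10 V1.ija 5 = {V1.r2} :=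
    tset_step hr4 rfl (by decide)
      (by intro m hm; interval_cases m <;>
            simp only [hr0, hr1, hr2, hr3, hr4, Set.mem_singleton_iff] <;> decide)
  have hr6 : σ1.tset R10 V1.ija 6 = {V1.e1} :=
    tset_step hr5 rfl (by decide)
      (by intro m hm; interval_cases m <;>
            simp only [hr0, hr1, hr2, hr3, hr4, hr5, Set.mem_singleton_iff] <;> decide)
  have hr7 : σ1.tset R10 V1.ija 7 = {V1.r3} :=
    tset_step hr6 rfl (by decide)
      (by intro m hm; interval_cases m <;>
            simp only [hr0, hr1, hr2, hr3, hr4, hr5, hr6, Set.mem_singleton_iff] <;> decide)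
  have hr8 : σ1.tset R10 V1.ija 8 = {V1.e2} :=
    tset_step hr7 rfl (by decide)
      (by intro m hm; interval_cases m <;>
            simp only [hr0, hr1, hr2, hr3, hr4, hr5, hr6, hr7, Set.mem_singleton_iff] <;> decide)
  have hr9 : σ1.tset R10 V1.ija 9 = {V1.r4b} :=
    tset_step hr8 rfl (by decide)
      (by intro m hm; interval_cases m <;>
            simp only [hr0, hr1, hr2, hr3, hr4, hr5, hr6, hr7, hr8, Set.mem_singleton_iff] <;> decide)
  have hr10 : σ1.tset R10 V1.ija 10 = {V1.ikb} :=
    tset_step hr9 rfl (by decide)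
      (by intro m hm; interval_cases m <;>
            simp only [hr0, hr1, hr2, hr3, hr4, hr5, hr6, hr7, hr8, hr9, Set.mem_singleton_iff] <;> decide)
  have hp0 : σ1.tset P10 V1.b 0 = {V1.b} := tset_zero _
  have hp1 : σ1.tset P10 V1.b 1 = {V1.r1} :=
    tset_step hp0 rfl (by decide)
      (by intro m hm; interval_cases m <;>
            simp only [hp0, Set.mem_singleton_iff] <;> decide)
  have hp2 : σ1.tset P10 V1.b 2 = {V1.e1} :=
    tset_step hp1 rfl (by decide)
      (by intro m hm; interval_cases m <;>
            simp only [hp0, hp1, Set.mem_singleton_iff] <;> decide)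
  have hp3 : σ1.tset P10 V1.b 3 = {V1.r3} :=
    tset_step hp2 rfl (by decide)
      (by intro m hm; interval_cases m <;>
            simp only [hp0, hp1, hp2, Set.mem_singleton_iff] <;> decide)
  have hp4 : σ1.tset P10 V1.b 4 = {V1.e2} :=
    tset_step hp3 rfl (by decide)
      (by intro m hm; interval_cases m <;>
            simp only [hp0, hp1, hp2, hp3, Set.mem_singleton_iff] <;> decide)
  have hp5 : σ1.tset P10 V1.b 5 = {V1.r4b} :=
    tset_step hp4 rfl (by decide)
      (by intro m hm; interval_cases m <;>
            simp only [hp0, hp1, hp2, hp3, hp4, Set.mem_singleton_iff] <;> decide)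
  have hp6 : σ1.tset P10 V1.b 6 = {V1.ikb} :=
    tset_step hp5 rfl (by decide)
      (by intro m hm; interval_cases m <;>
            simp only [hp0, hp1, hp2, hp3, hp4, hp5, Set.mem_singleton_iff] <;> decide)
  refine ⟨σ1, V1.b, rfl, V1.ija, ?_, V1.ikb, ?_, ?_⟩
  · show V1.ija ∈ σ1.tset Q10 V1.b 8
    rw [hq8]; rfl
  · show V1.ikb ∈ σ1.tset R10 V1.ija 10
    rw [hr10]; rfl
  · show V1.ikb ∈ σ1.tset P10 V1.b 6
    rw [hp6]; rfl

theorem part2 : ∃ (σ : Skeleton S10) (b : σ.Item), σ.classOf b = C10.B ∧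
    (σ.tfull P10 b ∩ σ.tfull P10' b).Nonempty := by
  have hp0 : σ2.tset P10 V2.b 0 = {V2.b} := tset_zero _
  have hp1 : σ2.tset P10 V2.b 1 = {V2.r1} :=
    tset_step hp0 rfl (by decide)
      (by intro m hm; interval_cases m <;>
            simp only [hp0, Set.mem_singleton_iff] <;> decide)
  have hp2 : σ2.tset P10 V2.b 2 = {V2.e1} :=
    tset_step hp1 rfl (by decide)
      (by intro m hm; interval_cases m <;>
            simp only [hp0, hp1, Set.mem_singleton_iff] <;> decide)
  have hp3 : σ2.tset P10 V2.b 3 = {V2.r3} :=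
    tset_step hp2 rfl (by decide)
      (by intro m hm; interval_cases m <;>
            simp only [hp0, hp1, hp2, Set.mem_singleton_iff] <;> decide)
  have hp4 : σ2.tset P10 V2.b 4 = {V2.e2} :=
    tset_step hp3 rfl (by decide)
      (by intro m hm; interval_cases m <;>
            simp only [hp0, hp1, hp2, hp3, Set.mem_singleton_iff] <;> decide)
  have hp5 : σ2.tset P10 V2.b 5 = {V2.r4} :=
    tset_step hp4 rfl (by decide)
      (by intro m hm; interval_cases m <;>
            simp only [hp0, hp1, hp2, hp3, hp4, Set.mem_singleton_iff] <;> decide)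
  have hp6 : σ2.tset P10 V2.b 6 = {V2.ik} :=
    tset_step hp5 rfl (by decide)
      (by intro m hm; interval_cases m <;>
            simp only [hp0, hp1, hp2, hp3, hp4, hp5, Set.mem_singleton_iff] <;> decide)
  have hq0 : σ2.tset P10' V2.b 0 = {V2.b} := tset_zero _
  have hq1 : σ2.tset P10' V2.b 1 = {V2.r1} :=
    tset_step hq0 rfl (by decide)
      (by intro m hm; interval_cases m <;>
            simp only [hq0, Set.mem_singleton_iff] <;> decide)
  have hq2 : σ2.tset P10' V2.b 2 = {V2.e1} :=
    tset_step hq1 rfl (by decide)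
      (by intro m hm; interval_cases m <;>
            simp only [hq0, hq1, Set.mem_singleton_iff] <;> decide)
  have hq3 : σ2.tset P10' V2.b 3 = {V2.r2} :=
    tset_step hq2 rfl (by decide)
      (by intro m hm; interval_cases m <;>
            simp only [hq0, hq1, hq2, Set.mem_singleton_iff] <;> decide)
  have hq4 : σ2.tset P10' V2.b 4 = {V2.e3} :=
    tset_step hq3 rfl (by decide)
      (by intro m hm; interval_cases m <;>
            simp only [hq0, hq1, hq2, hq3, Set.mem_singleton_iff] <;> decide)
  have hq5 : σ2.tset P10' V2.b 5 = {V2.r4} :=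
    tset_step hq4 rfl (by decide)
      (by intro m hm; interval_cases m <;>
            simp only [hq0, hq1, hq2, hq3, hq4, Set.mem_singleton_iff] <;> decide)
  have hq6 : σ2.tset P10' V2.b 6 = {V2.ik} :=
    tset_step hq5 rfl (by decide)
      (by intro m hm; interval_cases m <;>
            simp only [hq0, hq1, hq2, hq3, hq4, hq5, Set.mem_singleton_iff] <;> decide)
  refine ⟨σ2, V2.b, rfl, V2.ik, ?_, ?_⟩
  · show V2.ik ∈ σ2.tset P10 V2.b 6
    rw [hp6]; rfl
  · show V2.ik ∈ σ2.tset P10' V2.b 6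
    rw [hq6]; rfl

end CoInt
namespace CoInt

theorem part3 : ∀ (σ : Skeleton S10) (b : σ.Item), σ.classOf b = C10.B →
    ∀ ij ∈ σ.tfull Q10 b,
      σ.tfull R10 ij ∩ σ.tfull P10 b ∩ σ.tfull P10' b = ∅ := by
  intro σ b _hb ij hij
  -- extract the top of the Q-chain
  have hij8 : ij ∈ σ.tset Q10 b 8 := hij
  obtain ⟨hc8, ⟨x7, h7, a8⟩, -⟩ := (mem_tset_succ σ).1 hij8
  obtain ⟨hc7, ⟨x6, h6, a7⟩, -⟩ := (mem_tset_succ σ).1 h7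
  obtain ⟨hc6, ⟨x5, h5, a6⟩, -⟩ := (mem_tset_succ σ).1 h6
  obtain ⟨hc5, -, -⟩ := (mem_tset_succ σ).1 h5
  have hcij : σ.classOf ij = C10.Ij := (Option.some.inj hc8).symm
  have hcx7 : σ.classOf x7 = C10.R5 := (Option.some.inj hc7).symm
  have hcx6 : σ.classOf x6 = C10.Ik := (Option.some.inj hc6).symm
  have hcx5 : σ.classOf x5 = C10.R4 := (Option.some.inj hc5).symm
  -- P10' terminal set coincides with the level-6 Q10 terminal set
  have hP' : σ.tfull P10' b = σ.tset Q10 b 6 := by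
    exact congrArg Prod.fst
      (tsetAux_congr (P := P10') (P' := Q10) (k := 6) σ
        (by intro m hm; interval_cases m <;> rfl))
  apply Set.eq_empty_iff_forall_notMem.mpr
  rintro z ⟨⟨hzR, -⟩, hzP'⟩
  have hz6 : z ∈ σ.tset Q10 b 6 := hP' ▸ hzP'
  have hzx6 : z = x6 := tset_subsingleton σ Q10 b 6 hz6 h6
  -- extract the R-chain from ij
  have hzR10 : z ∈ σ.tset R10 ij 10 := hzR
  obtain ⟨-, ⟨w9, h9, az⟩, -⟩ := (mem_tset_succ σ).1 hzR10
  obtain ⟨hc9, ⟨w8, h8w, -⟩, hv9⟩ := (mem_tset_succ σ).1 h9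
  obtain ⟨-, ⟨w7, h7w, -⟩, -⟩ := (mem_tset_succ σ).1 h8w
  obtain ⟨-, ⟨w6, h6w, -⟩, -⟩ := (mem_tset_succ σ).1 h7w
  obtain ⟨-, ⟨w5, h5w, -⟩, -⟩ := (mem_tset_succ σ).1 h6w
  obtain ⟨-, ⟨w4, h4w, -⟩, -⟩ := (mem_tset_succ σ).1 h5w
  obtain ⟨-, ⟨w3, h3w, a4w⟩, -⟩ := (mem_tset_succ σ).1 h4w
  obtain ⟨hc3w, ⟨w2, h2w, a3w⟩, -⟩ := (mem_tset_succ σ).1 h3w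
  obtain ⟨hc2w, ⟨w1, h1w, a2w⟩, -⟩ := (mem_tset_succ σ).1 h2w
  obtain ⟨hc1w, ⟨w0, h0w, a1w⟩, -⟩ := (mem_tset_succ σ).1 h1w
  have hw0 : w0 = ij := h0w
  have hcw1 : σ.classOf w1 = C10.R5 := (Option.some.inj hc1w).symm
  have hcw2 : σ.classOf w2 = C10.Ik := (Option.some.inj hc2w).symm
  have hcw3 : σ.classOf w3 = C10.R4 := (Option.some.inj hc3w).symm
  have hcw9 : σ.classOf w9 = C10.R4 := (Option.some.inj hc9).symm
  -- identify the beginning of the R-chain with the tail of the Q-chain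
  have e1 : w1 = x7 :=
    σ.card_one (e := ij) (by rw [hcij]; rfl) rfl (hcw1.trans hcx7.symm)
      (σ.adj_symm (hw0 ▸ a1w)) a8
  have e2 : w2 = x6 :=
    σ.rel_unique (r := x7) (by rw [hcx7]; rfl) (σ.adj_symm (e1 ▸ a2w)) a7
      (hcw2.trans hcx6.symm)
  have e3 : w3 = x5 :=
    σ.card_one (e := x6) (by rw [hcx6]; rfl) rfl (hcw3.trans hcx5.symm)
      (σ.adj_symm (e2 ▸ a3w)) a6
  have e9 : w9 = x5 :=
    σ.card_one (e := x6) (by rw [hcx6]; rfl) rfl (hcw9.trans hcx5.symm)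
      (hzx6 ▸ az) a6
  -- but then the second R4-step of the R-chain revisits a burnt bridge
  have hw3v : w3 ∈ (σ.tsetAux R10 ij 8).2 :=
    (mem_visited_iff σ).2 ⟨3, by omega, h3w⟩
  exact hv9 ((e9.trans e3.symm) ▸ hw3v)

end CoInt
/-- co-intersectability is strictly stronger than the
conjunction of the RVE existence condition and intersectability: in the
counterexample schema, (1) `P ∈ extend(Q,R)` is witnessed in some skeleton,
(2) `P` and `P′` are intersectable, but (3) `⟨Q,R,P,P′⟩` is not
co-intersectable. -/
theorem co_intersectability_strictly_stronger :
    (∃ (σ : Skeleton S10) (b : σ.Item), σ.classOf b = C10.B ∧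
      ∃ ij ∈ σ.tfull Q10 b, (σ.tfull R10 ij ∩ σ.tfull P10 b).Nonempty) ∧
    (∃ (σ : Skeleton S10) (b : σ.Item), σ.classOf b = C10.B ∧
      (σ.tfull P10 b ∩ σ.tfull P10' b).Nonempty) ∧
    (∀ (σ : Skeleton S10) (b : σ.Item), σ.classOf b = C10.B →
      ∀ ij ∈ σ.tfull Q10 b,
        σ.tfull R10 ij ∩ σ.tfull P10 b ∩ σ.tfull P10' b = ∅) := by
  exact ⟨CoInt.part1, CoInt.part2, CoInt.part3⟩
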